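/- Let H, H_∞ be real Hilbert spaces, V: D(V) ⊆ H_∞ → H a densely defined closable linear operator, and for a probability space (X, μ) let 𝕍 act on simple functions F = Σ_j F_j h_j (F_j ∈ C_b(X), h_j ∈ D(V)) by (𝕍F)(x) = V(F(x)). Then 𝕍 is closable as an operator from L²(X, μ; H_∞) to L²(X, μ; H). -/

import Mathlib

open MeasureTheory BoundedContinuousFunction

section stmt14aux
open LinearPMap TopologicalSpace


variable {E F : Type*} [NormedAddCommGroup E] [InnerProductSpace ℝ E] [CompleteSpace E]
  [NormedAddCommGroup F] [InnerProductSpace ℝ F] [CompleteSpace F]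

theorem stmt14_aux_adjoint_dense (T : E →ₗ.[ℝ] F) (hd : Dense (T.domain : Set E))
    (hc : T.IsClosable) : Dense ((T†.domain : Submodule ℝ F) : Set F) := by
  rw [Submodule.dense_iff_topologicalClosure_eq_top, Submodule.topologicalClosure_eq_top_iff,
    Submodule.eq_bot_iff]
  intro k hk
  rw [Submodule.mem_orthogonal] at hk
  -- show (0, k) is in the closure of the graph of T
  set e : WithLp 2 (E × F) ≃L[ℝ] E × F := WithLp.prodContinuousLinearEquiv 2 ℝ E F with he
  set S : Submodule ℝ (WithLp 2 (E × F)) := T.graph.comap (e : WithLp 2 (E × F) →ₗ[ℝ] E × F)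
    with hS
  have hz : e.symm (0, k) ∈ Sᗮᗮ := by
    rw [Submodule.mem_orthogonal]
    intro w hw
    rw [Submodule.mem_orthogonal] at hw
    have hv : w.snd ∈ T†.domain := by
      apply mem_adjoint_domain_of_exists
      refine ⟨-w.fst, fun x => ?_⟩
      have hx : e.symm ((x : E), T x) ∈ S := by
        simp only [hS, Submodule.mem_comap]
        have h5 : (↑(e : WithLp 2 (E × F) →ₗ[ℝ] E × F) : WithLp 2 (E × F) → E × F) (e.symm ((x : E), T x)) = ((x : E), T x) := e.apply_symm_apply _
        rw [h5]
        exact T.mem_graph x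
      have h0 := hw _ hx
      rw [WithLp.prod_inner_apply] at h0
      have h1 : (e.symm ((x : E), T x)).fst = (x : E) := rfl
      have h2 : (e.symm ((x : E), T x)).snd = T x := rfl
      change inner ℝ (x : E) w.fst + inner ℝ (T x) w.snd = 0 at h0
      have c1 := real_inner_comm (T x : F) w.snd
      have c2 := real_inner_comm (x : E) w.fst
      simp only [inner_neg_left]
      linarith
    have h3 := hk w.snd hv
    rw [WithLp.prod_inner_apply]
    have h1 : (e.symm ((0 : E), k)).fst = (0 : E) := rfl
    have h2 : (e.symm ((0 : E), k)).snd = k := rfl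
    change inner ℝ w.fst (0 : E) + inner ℝ w.snd k = 0
    rw [inner_zero_right, zero_add]
    exact h3
  rw [Submodule.orthogonal_orthogonal_eq_closure] at hz
  have hmem : ((0 : E), k) ∈ closure (T.graph : Set (E × F)) := by
    have himg : ⇑e '' (S : Set (WithLp 2 (E × F))) = (T.graph : Set (E × F)) := by
      rw [hS]
      exact Set.image_preimage_eq (T.graph : Set (E × F)) e.surjective
    have hcl : ⇑e '' closure (S : Set (WithLp 2 (E × F))) = closure (⇑e '' (S : Set (WithLp 2 (E × F)))) := by
      exact e.toHomeomorph.image_closure (S : Set (WithLp 2 (E × F)))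
    have key : ⇑e '' closure (S : Set (WithLp 2 (E × F))) = closure (T.graph : Set (E × F)) := by
      rw [hcl, himg]
    rw [← key]
    have : (0, k) = e (e.symm (0, k)) := (e.apply_symm_apply _).symm
    rw [this]
    exact Set.mem_image_of_mem _ hz
  obtain ⟨f, hf⟩ := hc
  have : ((0 : E), k) ∈ f.graph := by
    rw [← hf]
    exact hmem
  exact f.graph_fst_eq_zero_snd this rfl



theorem stmt14_aux_ae {X : Type*} [MeasurableSpace X] {μ : Measure X}
    {H : Type*} [NormedAddCommGroup H] [InnerProductSpace ℝ H]
    {S : Set H} (hS : Dense S) {f : X → H} (hf : AEStronglyMeasurable f μ)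
    (h : ∀ v ∈ S, (fun x => (inner ℝ (f x) v : ℝ)) =ᵐ[μ] 0) : f =ᵐ[μ] 0 := by
  obtain ⟨t, ht, htf⟩ := hf.isSeparable_ae_range
  obtain ⟨d, hd_count, hdt⟩ := ht
  haveI : Encodable d := hd_count.toEncodable
  -- for each point of d and each n, choose an element of S close to it
  have hsel : ∀ (p : d) (n : ℕ), ∃ v ∈ S, ‖v - (p : H)‖ < 1 / (n + 1) := by
    intro p n
    have hpos : (0 : ℝ) < 1 / (n + 1) := by positivity
    obtain ⟨v, hv, hv'⟩ := Metric.mem_closure_iff.mp (hS (p : H)) _ hpos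
    exact ⟨v, hv, by rwa [dist_comm, dist_eq_norm] at hv'⟩
  choose v hvS hvlt using hsel
  have hae : ∀ᵐ x ∂μ, ∀ (p : d) (n : ℕ), (inner ℝ (f x) (v p n) : ℝ) = 0 := by
    rw [ae_all_iff]
    intro p
    rw [ae_all_iff]
    intro n
    exact h _ (hvS p n)
  filter_upwards [hae, htf] with x hx hxt
  -- show f x = 0
  by_contra hne
  have hpos : 0 < ‖f x‖ := by simpa [norm_pos_iff] using hne
  have hmem : f x ∈ closure d := hdt hxt
  obtain ⟨p, hp, hplt⟩ := Metric.mem_closure_iff.mp hmem (‖f x‖ / 4) (by positivity)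
  obtain ⟨n, hn⟩ := exists_nat_one_div_lt (show (0:ℝ) < ‖f x‖ / 4 by positivity)
  have h1 : ‖f x - v ⟨p, hp⟩ n‖ < ‖f x‖ / 2 := by
    have h2 := hvlt ⟨p, hp⟩ n
    have h3 : dist (f x) p = ‖f x - p‖ := dist_eq_norm _ _
    calc ‖f x - v ⟨p, hp⟩ n‖ ≤ ‖f x - p‖ + ‖p - v ⟨p, hp⟩ n‖ := norm_sub_le_norm_sub_add_norm_sub _ _ _
    _ < ‖f x‖ / 4 + ‖f x‖ / 4 := by
        refine add_lt_add ?_ ?_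
        · rw [← h3]; exact hplt
        · rw [← norm_neg, neg_sub]; exact lt_trans (hvlt ⟨p, hp⟩ n) hn
    _ = ‖f x‖ / 2 := by ring
  have h4 : (inner ℝ (f x) (f x) : ℝ) = inner ℝ (f x) (f x - v ⟨p, hp⟩ n) := by
    rw [inner_sub_right, hx ⟨p, hp⟩ n, sub_zero]
  have h5 : ‖f x‖ ^ 2 ≤ ‖f x‖ * (‖f x‖ / 2) := by
    calc ‖f x‖ ^ 2 = (inner ℝ (f x) (f x) : ℝ) := (real_inner_self_eq_norm_sq _).symm
    _ = inner ℝ (f x) (f x - v ⟨p, hp⟩ n) := h4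
    _ ≤ ‖f x‖ * ‖f x - v ⟨p, hp⟩ n‖ := real_inner_le_norm _ _
    _ ≤ ‖f x‖ * (‖f x‖ / 2) := by nlinarith
  nlinarith

end stmt14aux


theorem stmt14 {Hinf H X : Type*}
    [NormedAddCommGroup Hinf] [InnerProductSpace ℝ Hinf] [CompleteSpace Hinf]
    [NormedAddCommGroup H] [InnerProductSpace ℝ H] [CompleteSpace H]
    [TopologicalSpace X] [MeasurableSpace X] [BorelSpace X]
    (μ : Measure X) [IsProbabilityMeasure μ]
    (V : Hinf →ₗ.[ℝ] H) (hdense : Dense (V.domain : Set Hinf)) (hclos : V.IsClosable)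
    (F : ℕ → X → Hinf) (VF : ℕ → X → H)
    (hform : ∀ n, ∃ (m : ℕ) (φ : Fin m → (X →ᵇ ℝ)) (h : Fin m → V.domain),
      (F n = fun x => ∑ j, φ j x • ((h j : Hinf))) ∧
      (VF n = fun x => ∑ j, φ j x • V (h j)))
    (G : X → H) (hG : MemLp G 2 μ)
    (hF0 : Filter.Tendsto (fun n => eLpNorm (F n) 2 μ) Filter.atTop (nhds 0))
    (hVFG : Filter.Tendsto (fun n => eLpNorm (fun x => VF n x - G x) 2 μ)
      Filter.atTop (nhds 0)) :
    G =ᵐ[μ] 0 := by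
  -- continuity/measurability of the approximants
  have hFcont : ∀ n, StronglyMeasurable (F n) := by
    intro n
    obtain ⟨m, φ, h, hF, hVF⟩ := hform n
    rw [hF]
    exact Finset.stronglyMeasurable_fun_sum _ fun j _ =>
      ((φ j).continuous.stronglyMeasurable).smul stronglyMeasurable_const
  have hVFcont : ∀ n, StronglyMeasurable (VF n) := by
    intro n
    obtain ⟨m, φ, h, hF, hVF⟩ := hform n
    rw [hVF]
    exact Finset.stronglyMeasurable_fun_sum _ fun j _ =>
      ((φ j).continuous.stronglyMeasurable).smul stronglyMeasurable_const
  -- the domain of the adjoint of V is dense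
  have hadj : Dense ((LinearPMap.adjoint V).domain : Set H) :=
    stmt14_aux_adjoint_dense V hdense hclos
  refine stmt14_aux_ae hadj hG.1 ?_
  intro v hv
  set w : Hinf := LinearPMap.adjoint V ⟨v, hv⟩ with hw
  -- key pointwise identity
  have hpt : ∀ n x, (inner ℝ (VF n x) v : ℝ) = inner ℝ (F n x) w := by
    intro n x
    obtain ⟨m, φ, h, hF, hVF⟩ := hform n
    rw [hF, hVF]
    rw [sum_inner, sum_inner]
    refine Finset.sum_congr rfl fun j _ => ?_
    rw [real_inner_smul_left, real_inner_smul_left]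
    congr 1
    have := LinearPMap.adjoint_isFormalAdjoint hdense (⟨v, hv⟩ : (LinearPMap.adjoint V).domain)
      (h j)
    -- this : ⟪V† ⟨v,hv⟩, h j⟫ = ⟪v, V (h j)⟫
    rw [real_inner_comm v ((V (h j) : H)), real_inner_comm w ((h j : Hinf))]
    exact this.symm
  -- L² bound
  have hmeasG : AEStronglyMeasurable (fun x => (inner ℝ (G x) v : ℝ)) μ := by
    exact AEStronglyMeasurable.inner hG.1 aestronglyMeasurable_const
  have hbound : ∀ n, eLpNorm (fun x => (inner ℝ (G x) v : ℝ)) 2 μ ≤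
      (‖v‖₊ : ENNReal) * eLpNorm (fun x => VF n x - G x) 2 μ +
      (‖w‖₊ : ENNReal) * eLpNorm (F n) 2 μ := by
    intro n
    have hsplit : (fun x => (inner ℝ (G x) v : ℝ)) =
        (fun x => (inner ℝ (G x - VF n x) v : ℝ)) + fun x => (inner ℝ (F n x) w : ℝ) := by
      funext x
      simp only [Pi.add_apply, inner_sub_left]
      rw [← hpt n x]
      ring
    rw [hsplit]
    refine le_trans (eLpNorm_add_le ?_ ?_ (by norm_num)) ?_
    · exact AEStronglyMeasurable.inner (hG.1.sub (hVFcont n).aestronglyMeasurable)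
        aestronglyMeasurable_const
    · exact AEStronglyMeasurable.inner (hFcont n).aestronglyMeasurable
        aestronglyMeasurable_const
    refine add_le_add ?_ ?_
    · have h1 : eLpNorm (fun x => (inner ℝ (G x - VF n x) v : ℝ)) 2 μ ≤
          (‖v‖₊ : ENNReal) * eLpNorm (fun x => G x - VF n x) 2 μ := by
        have := eLpNorm_le_nnreal_smul_eLpNorm_of_ae_le_mul (μ := μ) (p := 2)
          (f := fun x => (inner ℝ (G x - VF n x) v : ℝ)) (g := fun x => G x - VF n x)
          (c := ‖v‖₊) ?_
        · simpa [ENNReal.smul_def] using this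
        · refine Filter.Eventually.of_forall fun x => ?_
          calc ‖(inner ℝ (G x - VF n x) v : ℝ)‖ ≤ ‖G x - VF n x‖ * ‖v‖ := norm_inner_le_norm _ _
          _ = ‖v‖₊ * ‖G x - VF n x‖ := by rw [mul_comm]; rfl
      have h2 : eLpNorm (fun x => G x - VF n x) 2 μ = eLpNorm (fun x => VF n x - G x) 2 μ := by
        rw [← eLpNorm_neg]
        congr 1
        funext x
        simp
      rw [h2] at h1
      exact h1
    · have := eLpNorm_le_nnreal_smul_eLpNorm_of_ae_le_mul (μ := μ) (p := 2)
        (f := fun x => (inner ℝ (F n x) w : ℝ)) (g := F n) (c := ‖w‖₊) ?_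
      · simpa [ENNReal.smul_def] using this
      · refine Filter.Eventually.of_forall fun x => ?_
        calc ‖(inner ℝ (F n x) w : ℝ)‖ ≤ ‖F n x‖ * ‖w‖ := norm_inner_le_norm _ _
        _ = ‖w‖₊ * ‖F n x‖ := by rw [mul_comm]; rfl
  -- the bound tends to 0
  have hlim : Filter.Tendsto (fun n => (‖v‖₊ : ENNReal) * eLpNorm (fun x => VF n x - G x) 2 μ +
      (‖w‖₊ : ENNReal) * eLpNorm (F n) 2 μ) Filter.atTop (nhds 0) := by
    have l1 := ENNReal.Tendsto.const_mul (a := (‖v‖₊ : ENNReal)) hVFG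
      (Or.inr ENNReal.coe_ne_top)
    have l2 := ENNReal.Tendsto.const_mul (a := (‖w‖₊ : ENNReal)) hF0
      (Or.inr ENNReal.coe_ne_top)
    simpa using Filter.Tendsto.add l1 l2
  have hzero : eLpNorm (fun x => (inner ℝ (G x) v : ℝ)) 2 μ = 0 := by
    refine le_antisymm ?_ (zero_le)
    exact ge_of_tendsto' hlim hbound
  have := (eLpNorm_eq_zero_iff hmeasG (by norm_num)).mp hzero
  exact this
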